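/- Let S̃_u and C be symmetric positive definite matrices of size n and m respectively, B an n×m real matrix, S_u = A + BC⁻¹Bᵀ with A symmetric positive semidefinite. Define the preconditioner M⁻¹ = [[I,0],[C⁻¹Bᵀ,I]]·[[S̃_u⁻¹,0],[0,-C⁻¹]]·[[I,BC⁻¹],[0,I]] and 𝒜 = [[A,B],[Bᵀ,0]]. Then M⁻¹𝒜 is similar to the matrix [[S̃_u^{-1/2}(S_u + BC⁻¹Bᵀ)S̃_u^{-1/2}, S̃_u^{-1/2}BC^{-1/2}],[-C^{-1/2}BᵀS̃_u^{-1/2}, 0]]. -/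

import Mathlib

open Matrix

section

open scoped ComplexOrder

/-- The positive semidefinite square root of a positive semidefinite matrix
(the Mathlib definition of December 2024, since removed from Mathlib). -/
noncomputable def Matrix.PosSemidef.sqrt {n : Type*} [Fintype n] [DecidableEq n] {𝕜 : Type*}
    [RCLike 𝕜] {A : Matrix n n 𝕜} (hA : A.PosSemidef) : Matrix n n 𝕜 :=
  hA.1.eigenvectorUnitary.1 * diagonal ((↑) ∘ (√·) ∘ hA.1.eigenvalues) *
  (star hA.1.eigenvectorUnitary : Matrix n n 𝕜)

end

open scoped ComplexOrder in
theorem Matrix.PosSemidef.sqrt_mul_self {n : Type*} [Fintype n] [DecidableEq n] {𝕜 : Type*}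
    [RCLike 𝕜] {A : Matrix n n 𝕜} (hA : A.PosSemidef) : hA.sqrt * hA.sqrt = A := by
  have hU := Unitary.coe_star_mul_self hA.1.eigenvectorUnitary
  have hD : diagonal ((↑) ∘ (√·) ∘ hA.1.eigenvalues) * diagonal ((↑) ∘ (√·) ∘ hA.1.eigenvalues)
      = (diagonal (RCLike.ofReal ∘ hA.1.eigenvalues) : Matrix n n 𝕜) := by
    rw [diagonal_mul_diagonal]; congr 1; funext i
    simp [← RCLike.ofReal_mul, Real.mul_self_sqrt (hA.eigenvalues_nonneg i)]
  conv_rhs => rw [hA.1.spectral_theorem, Unitary.conjStarAlgAut_apply]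
  unfold Matrix.PosSemidef.sqrt
  rw [← hD]
  simp only [Matrix.mul_assoc]
  rw [← Matrix.mul_assoc (star _ : Matrix n n 𝕜) (↑_), hU, Matrix.one_mul]

/-- The RACP preconditioned matrix `M⁻¹𝒜` is similar to a non-symmetric
saddle-point matrix (equation (13) of the paper). -/
theorem racp_preconditioned_similar
    (n m : ℕ)
    (A : Matrix (Fin n) (Fin n) ℝ) (hA : A.PosSemidef)
    (B : Matrix (Fin n) (Fin m) ℝ)
    (C : Matrix (Fin m) (Fin m) ℝ) (hC : C.PosDef)
    (Stilde : Matrix (Fin n) (Fin n) ℝ) (hStilde : Stilde.PosDef)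
    (Su : Matrix (Fin n) (Fin n) ℝ) (hSu : Su = A + B * C⁻¹ * Bᵀ)
    (StHalfInv : Matrix (Fin n) (Fin n) ℝ)
    (hStHalfInv : StHalfInv = (hStilde.posSemidef.sqrt)⁻¹)
    (CHalfInv : Matrix (Fin m) (Fin m) ℝ)
    (hCHalfInv : CHalfInv = (hC.posSemidef.sqrt)⁻¹)
    (Minv : Matrix (Fin n ⊕ Fin m) (Fin n ⊕ Fin m) ℝ)
    (hMinv : Minv =
      Matrix.fromBlocks 1 0 (C⁻¹ * Bᵀ) 1 *
      Matrix.fromBlocks Stilde⁻¹ 0 0 (-C⁻¹) *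
      Matrix.fromBlocks 1 (B * C⁻¹) 0 1)
    (𝒜 : Matrix (Fin n ⊕ Fin m) (Fin n ⊕ Fin m) ℝ)
    (h𝒜 : 𝒜 = Matrix.fromBlocks A B Bᵀ 0) :
    ∃ T : Matrix (Fin n ⊕ Fin m) (Fin n ⊕ Fin m) ℝ, IsUnit T ∧
      T⁻¹ * (Minv * 𝒜) * T =
        Matrix.fromBlocks
          (StHalfInv * (Su + B * C⁻¹ * Bᵀ) * StHalfInv)
          (StHalfInv * B * CHalfInv)
          (-(CHalfInv * Bᵀ * StHalfInv)) 0 := by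
  subst hSu hStHalfInv hCHalfInv hMinv h𝒜
  set s := hStilde.posSemidef.sqrt with hs
  set c := hC.posSemidef.sqrt with hc
  have hsU : IsUnit s := by
    have h1 : IsUnit (s * s) := by
      rw [hStilde.posSemidef.sqrt_mul_self]; exact hStilde.isUnit
    rw [Matrix.isUnit_iff_isUnit_det] at h1 ⊢
    rw [Matrix.det_mul] at h1
    exact isUnit_of_mul_isUnit_left h1
  have hcU : IsUnit c := by
    have h1 : IsUnit (c * c) := by
      rw [hC.posSemidef.sqrt_mul_self]; exact hC.isUnit
    rw [Matrix.isUnit_iff_isUnit_det] at h1 ⊢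
    rw [Matrix.det_mul] at h1
    exact isUnit_of_mul_isUnit_left h1
  have hss : s⁻¹ * s⁻¹ = Stilde⁻¹ := by
    rw [← Matrix.mul_inv_rev, hStilde.posSemidef.sqrt_mul_self]
  have hcc : c⁻¹ * c⁻¹ = C⁻¹ := by
    rw [← Matrix.mul_inv_rev, hC.posSemidef.sqrt_mul_self]
  set T : Matrix (Fin n ⊕ Fin m) (Fin n ⊕ Fin m) ℝ :=
    Matrix.fromBlocks 1 0 (C⁻¹ * Bᵀ) 1 * Matrix.fromBlocks s⁻¹ 0 0 c⁻¹ with hT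
  have hTU : IsUnit T := by
    refine IsUnit.mul ?_ ?_
    · rw [Matrix.isUnit_iff_isUnit_det, Matrix.det_fromBlocks_zero₁₂]
      simp
    · rw [Matrix.isUnit_iff_isUnit_det, Matrix.det_fromBlocks_zero₁₂]
      exact ((Matrix.isUnit_nonsing_inv_det _ ((Matrix.isUnit_iff_isUnit_det s).mp hsU)).mul
        (Matrix.isUnit_nonsing_inv_det _ ((Matrix.isUnit_iff_isUnit_det c).mp hcU)))
  refine ⟨T, hTU, ?_⟩
  set R : Matrix (Fin n ⊕ Fin m) (Fin n ⊕ Fin m) ℝ :=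
    Matrix.fromBlocks
      (s⁻¹ * ((A + B * C⁻¹ * Bᵀ) + B * C⁻¹ * Bᵀ) * s⁻¹)
      (s⁻¹ * B * c⁻¹)
      (-(c⁻¹ * Bᵀ * s⁻¹)) 0 with hR
  have key : (Matrix.fromBlocks 1 0 (C⁻¹ * Bᵀ) 1 *
      Matrix.fromBlocks Stilde⁻¹ 0 0 (-C⁻¹) *
      Matrix.fromBlocks 1 (B * C⁻¹) 0 1 * Matrix.fromBlocks A B Bᵀ 0) * T = T * R := by
    rw [hT, hR, ← hss, ← hcc]
    simp only [Matrix.fromBlocks_multiply, Matrix.mul_one, Matrix.one_mul, Matrix.mul_zero,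
      Matrix.zero_mul, add_zero, zero_add, Matrix.neg_mul, Matrix.mul_neg,
      mul_one, one_mul, mul_zero, zero_mul, neg_mul, mul_neg]
    rw [Matrix.fromBlocks_inj]
    refine ⟨?_, ?_, ?_, ?_⟩ <;>
      · simp only [Matrix.mul_add, Matrix.add_mul, Matrix.mul_assoc, Matrix.neg_mul,
          Matrix.mul_neg, neg_neg, Matrix.zero_mul, Matrix.mul_zero, neg_zero, add_zero, zero_add]
        try abel
  calc T⁻¹ * (Matrix.fromBlocks 1 0 (C⁻¹ * Bᵀ) 1 *
        Matrix.fromBlocks Stilde⁻¹ 0 0 (-C⁻¹) *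
        Matrix.fromBlocks 1 (B * C⁻¹) 0 1 * Matrix.fromBlocks A B Bᵀ 0) * T
      = T⁻¹ * (T * R) := by rw [Matrix.mul_assoc, key]
    _ = R := by
        rw [← Matrix.mul_assoc, Matrix.nonsing_inv_mul T ((Matrix.isUnit_iff_isUnit_det T).mp hTU),
          Matrix.one_mul]
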